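/- Fix a natural number q ≥ 1. Suppose that for every natural number m there is given an element ρ_m of F satisfying ρ_m ∼ y^{q+m+1}, that is, ρ_m = u_m · y^{q+m+1} + σ_m where u_m is a unit of R and σ_m lies in the R-span of the monomials x^i y^j z^k with j < q+m+1. Let S be the R-submodule of F generated by the elements x^i y^m z^k (z − x) for all i, k, m ≥ 0 together with the elements x^i ρ_m for all i, m ≥ 0. Then the quotient R-module F/S is free with basis the images of the monomials in the set {x^l y^m : l ≥ 0, 0 ≤ m ≤ q}. (This is the algebraic content of the paper's main Theorem: the Kauffman bracket skein module K(M_q) of the exterior M_q of a q-twist knot is a free ℤ[t,t⁻¹]-module with basis the cables {x^l y^m : m ≤ q}, where x is a meridian of the knot and y is the other component of the two-component link xy; the paper presents K(M_q) as K(H) modulo the handle-slide relations, which its Sections 4 and 5 reduce exactly to the submodule S above.) -/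

import Mathlib

open MvPolynomial

/-- `R` is the Laurent polynomial ring `ℤ[t,t⁻¹]`. -/
noncomputable abbrev R : Type := LaurentPolynomial ℤ

/-- `F` is the polynomial ring `R[x,y,z]`, with `x = X 0`, `y = X 1`, `z = X 2`,
regarded as an `R`-module with basis the monomials `x^l y^m z^n`. -/
noncomputable abbrev F : Type := MvPolynomial (Fin 3) R

namespace SkeinAux

def w (d : Fin 3 →₀ ℕ) : ℕ ×ₗ ℕ := toLex (d 1, d 2)





noncomputable def wt (p : F) : WithBot (ℕ ×ₗ ℕ) :=
  p.support.sup (fun d => (w d : WithBot (ℕ ×ₗ ℕ)))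

noncomputable def V (ω : WithBot (ℕ ×ₗ ℕ)) : Submodule R F :=
  Submodule.span R {p : F | ∃ d : Fin 3 →₀ ℕ, (w d : WithBot (ℕ ×ₗ ℕ)) < ω ∧ p = monomial d 1}

lemma le_wt {p : F} {d : Fin 3 →₀ ℕ} (hd : d ∈ p.support) :
    (w d : WithBot (ℕ ×ₗ ℕ)) ≤ wt p := by
  unfold wt; exact Finset.le_sup (f := fun d => (w d : WithBot (ℕ ×ₗ ℕ))) hd

lemma V_mono {ω ω' : WithBot (ℕ ×ₗ ℕ)} (h : ω ≤ ω') : V ω ≤ V ω' :=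
  Submodule.span_mono (fun p ⟨d, hd, hp⟩ => ⟨d, lt_of_lt_of_le hd h, hp⟩)

lemma forall_support_lt_of_mem_V {ω : WithBot (ℕ ×ₗ ℕ)} {p : F} (hp : p ∈ V ω) :
    ∀ d ∈ p.support, (w d : WithBot (ℕ ×ₗ ℕ)) < ω := by
  induction hp using Submodule.span_induction with
  | mem p hp =>
    classical
    obtain ⟨d, hd, rfl⟩ := hp
    intro e he
    rw [support_monomial] at he
    simp only [if_neg one_ne_zero, Finset.mem_singleton] at he
    exact he ▸ hd
  | zero => simp
  | add a b _ _ iha ihb =>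
    intro d hd
    rcases Finset.mem_union.mp (MvPolynomial.support_add hd) with h | h
    · exact iha d h
    · exact ihb d h
  | smul c a _ iha =>
    intro d hd
    exact iha d (MvPolynomial.support_smul hd)

lemma mem_V_of_forall {ω : WithBot (ℕ ×ₗ ℕ)} {p : F}
    (h : ∀ d ∈ p.support, (w d : WithBot (ℕ ×ₗ ℕ)) < ω) : p ∈ V ω := by
  rw [MvPolynomial.as_sum p]
  refine Submodule.sum_mem _ (fun d hd => ?_)
  have : (monomial d (coeff d p) : F) = coeff d p • monomial d 1 := by
    rw [MvPolynomial.smul_monomial, smul_eq_mul, mul_one]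
  rw [this]
  exact Submodule.smul_mem _ _ (Submodule.subset_span ⟨d, h d hd, rfl⟩)

lemma wt_lt_of_mem_V {ω : WithBot (ℕ ×ₗ ℕ)} {p : F} (hp : p ∈ V ω) (hne : p ≠ 0) :
    wt p < ω := by
  have hs : p.support.Nonempty := by
    rw [Finset.nonempty_iff_ne_empty]
    simpa [MvPolynomial.support_eq_empty] using hne
  obtain ⟨d, hd⟩ := hs
  have hbot : (⊥ : WithBot (ℕ ×ₗ ℕ)) < ω :=
    lt_of_le_of_lt bot_le (forall_support_lt_of_mem_V hp d hd)
  exact (Finset.sup_lt_iff hbot).mpr (forall_support_lt_of_mem_V hp)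




noncomputable def trip (i m k : ℕ) : Fin 3 →₀ ℕ :=
  Finsupp.single 0 i + Finsupp.single 1 m + Finsupp.single 2 k

@[simp] lemma trip_apply0 (i m k : ℕ) : trip i m k 0 = i := by
  simp [trip, Finsupp.single_apply]
@[simp] lemma trip_apply1 (i m k : ℕ) : trip i m k 1 = m := by
  simp [trip, Finsupp.single_apply]
@[simp] lemma trip_apply2 (i m k : ℕ) : trip i m k 2 = k := by
  simp [trip, Finsupp.single_apply]

lemma eq_trip (d : Fin 3 →₀ ℕ) : d = trip (d 0) (d 1) (d 2) := by
  ext x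
  fin_cases x <;> simp [trip, Finsupp.single_apply]

lemma monomial_trip (i m k : ℕ) :
    (monomial (trip i m k) 1 : F) = X 0 ^ i * X 1 ^ m * X 2 ^ k := by
  simp [trip, X_pow_eq_monomial, monomial_mul]

lemma mono_eq (d : Fin 3 →₀ ℕ) :
    (monomial d 1 : F) = X 0 ^ (d 0) * X 1 ^ (d 1) * X 2 ^ (d 2) := by
  conv_lhs => rw [eq_trip d]
  exact monomial_trip _ _ _





noncomputable def mb : Module.Basis (Fin 3 →₀ ℕ) R F := MvPolynomial.basisMonomials (Fin 3) R

@[simp] lemma mb_apply (d : Fin 3 →₀ ℕ) : mb d = monomial d 1 := by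
  rw [mb]
  exact congrFun (MvPolynomial.coe_basisMonomials (Fin 3) R) d

variable (q : ℕ) (ρ : ℕ → F) (u : ℕ → Rˣ)

noncomputable def Md (d : Fin 3 →₀ ℕ) : F :=
  if 1 ≤ d 2 then X 0 ^ (d 0 + 1) * X 1 ^ (d 1) * X 2 ^ (d 2 - 1)
  else if q + 1 ≤ d 1 then
    -((((u (d 1 - (q + 1)))⁻¹ : Rˣ) : R) •
      (X 0 ^ (d 0) * (ρ (d 1 - (q + 1)) - ((u (d 1 - (q + 1)) : R) • (X 1 ^ (d 1) : F)))))
  else 0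

noncomputable def M : F →ₗ[R] F := mb.constr ℕ (Md q ρ u)

@[simp] lemma M_monomial (d : Fin 3 →₀ ℕ) : M q ρ u (monomial d 1) = Md q ρ u d := by
  rw [← mb_apply, M]
  exact Module.Basis.constr_basis mb ℕ (Md q ρ u) d


variable {q : ℕ} {ρ : ℕ → F} {u : ℕ → Rˣ}

lemma Md_mem_V
    (hu : ∀ m : ℕ, ρ m - (u m : R) • (X 1 : F) ^ (q + m + 1) ∈
        Submodule.span R {p : F | ∃ i j k : ℕ, j < q + m + 1 ∧ p = X 0 ^ i * X 1 ^ j * X 2 ^ k})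
    (d : Fin 3 →₀ ℕ) : Md q ρ u d ∈ V ↑(w d) := by
  rw [Md]
  split_ifs with h1 h2
  · apply Submodule.subset_span
    refine ⟨trip (d 0 + 1) (d 1) (d 2 - 1), ?_, (monomial_trip _ _ _).symm⟩
    simp only [WithBot.coe_lt_coe, w, trip_apply1, trip_apply2]
    exact Prod.Lex.lt_iff.mpr (Or.inr ⟨rfl, by show d 2 - 1 < d 2; omega⟩)
  · set m := d 1 - (q + 1) with hm
    have hqm : q + m + 1 = d 1 := by omega
    apply Submodule.neg_mem
    apply Submodule.smul_mem
    have hs := hu m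
    rw [hqm] at hs
    have hmem : X 0 ^ (d 0) * (ρ m - (u m : R) • (X 1 : F) ^ (d 1)) ∈
        Submodule.map (LinearMap.mulLeft R ((X 0 : F) ^ (d 0)))
          (Submodule.span R {p : F | ∃ i j k : ℕ, j < d 1 ∧ p = X 0 ^ i * X 1 ^ j * X 2 ^ k}) :=
      ⟨_, hs, rfl⟩
    refine Submodule.map_le_iff_le_comap.mpr ?_ hmem
    rw [Submodule.span_le]
    rintro p ⟨i, j, k, hj, rfl⟩
    simp only [SetLike.mem_coe, Submodule.mem_comap, LinearMap.mulLeft_apply]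
    apply Submodule.subset_span
    refine ⟨trip (d 0 + i) j k, ?_, by rw [monomial_trip, pow_add]; ring⟩
    simp only [WithBot.coe_lt_coe, w, trip_apply1, trip_apply2]
    exact Prod.Lex.lt_iff.mpr (Or.inl hj)
  · exact Submodule.zero_mem _

lemma M_mem_V
    (hu : ∀ m : ℕ, ρ m - (u m : R) • (X 1 : F) ^ (q + m + 1) ∈
        Submodule.span R {p : F | ∃ i j k : ℕ, j < q + m + 1 ∧ p = X 0 ^ i * X 1 ^ j * X 2 ^ k})
    (p : F) : M q ρ u p ∈ V (wt p) := by
  have hrw : M q ρ u p = ∑ d ∈ p.support, coeff d p • Md q ρ u d := by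
    conv_lhs => rw [MvPolynomial.as_sum p]
    rw [map_sum]
    refine Finset.sum_congr rfl (fun d _ => ?_)
    have h1 : (monomial d (coeff d p) : F) = coeff d p • monomial d 1 := by
      rw [MvPolynomial.smul_monomial, smul_eq_mul, mul_one]
    rw [h1, map_smul, M_monomial]
  rw [hrw]
  refine Submodule.sum_mem _ (fun d hd => ?_)
  exact Submodule.smul_mem _ _ (V_mono (le_wt hd) (Md_mem_V hu d))

lemma wt_M_lt
    (hu : ∀ m : ℕ, ρ m - (u m : R) • (X 1 : F) ^ (q + m + 1) ∈
        Submodule.span R {p : F | ∃ i j k : ℕ, j < q + m + 1 ∧ p = X 0 ^ i * X 1 ^ j * X 2 ^ k})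
    {p : F} (hp : p ≠ 0) : wt (M q ρ u p) < wt p := by
  by_cases hM : M q ρ u p = 0
  · rw [hM]
    have hs : p.support.Nonempty := by
      rw [Finset.nonempty_iff_ne_empty]
      simpa [MvPolynomial.support_eq_empty] using hp
    obtain ⟨d, hd⟩ := hs
    calc wt (0 : F) = ⊥ := by simp [wt]
    _ < ↑(w d) := by simp
    _ ≤ wt p := le_wt hd
  · exact wt_lt_of_mem_V (M_mem_V hu p) hM

lemma exists_pow_eq_zero
    (hu : ∀ m : ℕ, ρ m - (u m : R) • (X 1 : F) ^ (q + m + 1) ∈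
        Submodule.span R {p : F | ∃ i j k : ℕ, j < q + m + 1 ∧ p = X 0 ^ i * X 1 ^ j * X 2 ^ k})
    (p : F) : ∃ n, ((M q ρ u) ^ n) p = 0 := by
  have key : ∀ ω : WithBot (ℕ ×ₗ ℕ), ∀ p : F, wt p = ω → ∃ n, ((M q ρ u) ^ n) p = 0 := by
    intro ω
    induction ω using WellFoundedLT.induction with
    | _ ω ih =>
      intro p hp
      by_cases h0 : p = 0
      · exact ⟨0, by simp [h0]⟩
      · obtain ⟨n, hn⟩ := ih (wt (M q ρ u p)) (hp ▸ wt_M_lt hu h0) (M q ρ u p) rfl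
        exact ⟨n + 1, by rw [pow_succ, Module.End.mul_apply, hn]⟩
  exact key (wt p) p rfl

lemma geom_aux (n : ℕ) (v : F) :
    (∑ j ∈ Finset.range n, ((M q ρ u) ^ j) v) -
      M q ρ u (∑ j ∈ Finset.range n, ((M q ρ u) ^ j) v) = v - ((M q ρ u) ^ n) v := by
  induction n with
  | zero => simp
  | succ n ih =>
    rw [Finset.sum_range_succ, map_add]
    have h1 : M q ρ u (((M q ρ u) ^ n) v) = ((M q ρ u) ^ (n + 1)) v := by
      rw [pow_succ', Module.End.mul_apply]
    rw [h1]
    have h2 : (∑ j ∈ Finset.range n, ((M q ρ u) ^ j) v) + ((M q ρ u) ^ n) v -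
        (M q ρ u (∑ j ∈ Finset.range n, ((M q ρ u) ^ j) v) + ((M q ρ u) ^ (n+1)) v) =
        ((∑ j ∈ Finset.range n, ((M q ρ u) ^ j) v) -
          M q ρ u (∑ j ∈ Finset.range n, ((M q ρ u) ^ j) v)) +
        (((M q ρ u) ^ n) v - ((M q ρ u) ^ (n+1)) v) := by abel
    rw [h2, ih]
    abel

noncomputable def Φ (q : ℕ) (ρ : ℕ → F) (u : ℕ → Rˣ) : F →ₗ[R] F := LinearMap.id - M q ρ u

lemma Φ_bijective
    (hu : ∀ m : ℕ, ρ m - (u m : R) • (X 1 : F) ^ (q + m + 1) ∈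
        Submodule.span R {p : F | ∃ i j k : ℕ, j < q + m + 1 ∧ p = X 0 ^ i * X 1 ^ j * X 2 ^ k}) :
    Function.Bijective (Φ q ρ u) := by
  constructor
  · rw [injective_iff_map_eq_zero]
    intro p hp
    rw [Φ, LinearMap.sub_apply, LinearMap.id_apply, sub_eq_zero] at hp
    by_contra h0
    have := wt_M_lt hu h0
    rw [← hp] at this
    exact lt_irrefl _ this
  · intro v
    obtain ⟨n, hn⟩ := exists_pow_eq_zero hu v
    refine ⟨∑ j ∈ Finset.range n, ((M q ρ u) ^ j) v, ?_⟩
    rw [Φ, LinearMap.sub_apply, LinearMap.id_apply, geom_aux, hn, sub_zero]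

lemma Φ_monomial (d : Fin 3 →₀ ℕ) :
    Φ q ρ u (monomial d 1) = monomial d 1 - Md q ρ u d := by
  rw [Φ, LinearMap.sub_apply, LinearMap.id_apply, M_monomial]

lemma Φval1 {d : Fin 3 →₀ ℕ} (h1 : 1 ≤ d 2) :
    Φ q ρ u (monomial d 1) =
      X 0 ^ (d 0) * X 1 ^ (d 1) * X 2 ^ (d 2 - 1) * (X 2 - X 0) := by
  rw [Φ_monomial, Md, if_pos h1, mono_eq]
  obtain ⟨k, hk⟩ : ∃ k, d 2 = k + 1 := ⟨d 2 - 1, by omega⟩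
  rw [hk]
  simp only [Nat.add_sub_cancel]
  ring

lemma Φval2 {d : Fin 3 →₀ ℕ} (h2 : d 2 = 0) (h3 : q + 1 ≤ d 1) :
    Φ q ρ u (monomial d 1) =
      (((u (d 1 - (q + 1)))⁻¹ : Rˣ) : R) • (X 0 ^ (d 0) * ρ (d 1 - (q + 1))) := by
  have h1 : ¬ 1 ≤ d 2 := by omega
  rw [Φ_monomial, Md, if_neg h1, if_pos h3, sub_neg_eq_add, mul_sub, mul_smul_comm,
    smul_sub, smul_smul, Units.inv_mul, one_smul, mono_eq, h2, pow_zero, mul_one]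
  abel

lemma Φval3 {d : Fin 3 →₀ ℕ} (h2 : d 2 = 0) (h3 : d 1 ≤ q) :
    Φ q ρ u (monomial d 1) = X 0 ^ (d 0) * X 1 ^ (d 1) := by
  have h1 : ¬ 1 ≤ d 2 := by omega
  have h3' : ¬ q + 1 ≤ d 1 := by omega
  rw [Φ_monomial, Md, if_neg h1, if_neg h3', sub_zero, mono_eq, h2, pow_zero, mul_one]

end SkeinAux

open SkeinAux

/-- Fix `q ≥ 1`.  Suppose for every `m` we are given `ρ m ∼ y^{q+m+1}`, i.e.
`ρ m = u_m • y^{q+m+1} + σ_m` with `u_m` a unit of `R` and `σ_m` in the `R`-span of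
the monomials `x^i y^j z^k` with `j < q+m+1`.  Let `S` be the `R`-submodule of `F`
generated by the elements `x^i y^m z^k (z − x)` together with the elements `x^i ρ_m`.
Then `F ⧸ S` is a free `R`-module with basis the images of the monomials
`{x^l y^m : l ≥ 0, 0 ≤ m ≤ q}`.  (Algebraic content of the paper's main theorem on
the Kauffman bracket skein module of a `q`-twist knot exterior.) -/
theorem skein_module_twist_knot_free (q : ℕ) (hq : 1 ≤ q) (ρ : ℕ → F)
    (hρ : ∀ m : ℕ, ∃ u : Rˣ,
      ρ m - (u : R) • (X 1 : F) ^ (q + m + 1) ∈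
        Submodule.span R
          {p : F | ∃ i j k : ℕ, j < q + m + 1 ∧ p = X 0 ^ i * X 1 ^ j * X 2 ^ k})
    (S : Submodule R F)
    (hS : S = Submodule.span R
        ({p : F | ∃ i m k : ℕ, p = X 0 ^ i * X 1 ^ m * X 2 ^ k * (X 2 - X 0)} ∪
         {p : F | ∃ i m : ℕ, p = X 0 ^ i * ρ m})) :
    ∃ b : Module.Basis (ℕ × {m : ℕ // m ≤ q}) R (F ⧸ S),
      ∀ lm : ℕ × {m : ℕ // m ≤ q},
        b lm = Submodule.Quotient.mk ((X 0 : F) ^ lm.1 * X 1 ^ (lm.2 : ℕ)) := by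
  classical
  choose u hu using hρ
  have hbij := Φ_bijective (q := q) (ρ := ρ) (u := u) hu
  set e : F ≃ₗ[R] F := LinearEquiv.ofBijective _ hbij with he
  set b : Module.Basis (Fin 3 →₀ ℕ) R F := mb.map e with hbdef
  have hb : ∀ d, b d = Φ q ρ u (monomial d 1) := by
    intro d
    rw [hbdef, Module.Basis.map_apply, mb_apply, he, LinearEquiv.ofBijective_apply]
  set J : Set (Fin 3 →₀ ℕ) := {d | 1 ≤ d 2 ∨ q + 1 ≤ d 1} with hJ
  have hSpan : S = Submodule.span R (b '' J) := by
    rw [hS]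
    apply le_antisymm
    · rw [Submodule.span_le]
      rintro p (⟨i, m, k, rfl⟩ | ⟨i, m, rfl⟩)
      · apply Submodule.subset_span
        refine ⟨trip i m (k + 1), Or.inl (by simp), ?_⟩
        rw [hb, Φval1 (by simp)]
        simp
      · have hd1 : (trip i (q + m + 1) 0) 1 = q + m + 1 := by simp
        have hbd : b (trip i (q + m + 1) 0) =
            (((u m)⁻¹ : Rˣ) : R) • (X 0 ^ i * ρ m) := by
          rw [hb, Φval2 (by simp) (by simp)]
          simp
        have : X 0 ^ i * ρ m = ((u m : Rˣ) : R) • b (trip i (q + m + 1) 0) := by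
          rw [hbd, smul_smul, Units.mul_inv, one_smul]
        rw [this]
        refine Submodule.smul_mem _ _ (Submodule.subset_span ?_)
        exact ⟨trip i (q + m + 1) 0, Or.inr (by simp), rfl⟩
    · rw [Submodule.span_le]
      rintro _ ⟨d, hd, rfl⟩
      by_cases h1 : 1 ≤ d 2
      · exact Submodule.subset_span
          (Or.inl ⟨d 0, d 1, d 2 - 1, by rw [hb, Φval1 h1]⟩)
      · have h2 : d 2 = 0 := by omega
        have h3 : q + 1 ≤ d 1 := by
          rcases hd with h | h
          · omega
          · exact h
        rw [hb, Φval2 h2 h3]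
        exact Submodule.smul_mem _ _
          (Submodule.subset_span (Or.inr ⟨d 0, d 1 - (q + 1), rfl⟩))
  set T : Submodule R F := Submodule.span R (b '' Jᶜ) with hT
  have hdisj : Disjoint S T := by
    rw [hSpan, hT]
    exact b.linearIndependent.disjoint_span_image disjoint_compl_right
  have hsup : S ⊔ T = ⊤ := by
    rw [hSpan, hT, ← Submodule.span_union, ← Set.image_union, Set.union_compl_self,
      Set.image_univ, b.span_eq]
  have hcompl : IsCompl S T := ⟨hdisj, codisjoint_iff.mpr hsup⟩
  have hli : LinearIndependent R (fun j : ↥(Jᶜ) => b ↑j) :=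
    b.linearIndependent.comp _ Subtype.val_injective
  have hrange : Submodule.span R (Set.range (fun j : ↥(Jᶜ) => b ↑j)) = T := by
    rw [hT, Set.image_eq_range]
  let bT : Module.Basis ↥(Jᶜ) R ↥T := (Module.Basis.span hli).map (LinearEquiv.ofEq _ _ hrange)
  let e2 : (F ⧸ S) ≃ₗ[R] ↥T := Submodule.quotientEquivOfIsCompl S T hcompl
  let bQ : Module.Basis ↥(Jᶜ) R (F ⧸ S) := bT.map e2.symm
  have hbQ : ∀ j : ↥(Jᶜ), bQ j = Submodule.Quotient.mk (b ↑j) := by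
    intro j
    show e2.symm (bT j) = _
    rw [Submodule.quotientEquivOfIsCompl_symm_apply]
    congr 1
    show ((LinearEquiv.ofEq _ _ hrange) ((Module.Basis.span hli) j) : F) = b ↑j
    rw [LinearEquiv.coe_ofEq_apply, Module.Basis.span_apply]
  have hJc : ∀ d : Fin 3 →₀ ℕ, d ∈ Jᶜ ↔ (d 2 = 0 ∧ d 1 ≤ q) := by
    intro d
    simp only [Set.mem_compl_iff, hJ, Set.mem_setOf_eq]
    omega
  let ε : (ℕ × {m : ℕ // m ≤ q}) ≃ ↥(Jᶜ) :=
  { toFun := fun lm => ⟨trip lm.1 lm.2 0, (hJc _).mpr ⟨by simp, by simpa using lm.2.2⟩⟩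
    invFun := fun d => (d.1 0, ⟨d.1 1, ((hJc _).mp d.2).2⟩)
    left_inv := fun lm => by
      ext
      · simp
      · simp
    right_inv := fun d => by
      have h2 : (d : Fin 3 →₀ ℕ) 2 = 0 := ((hJc _).mp d.2).1
      ext1
      ext x
      fin_cases x <;> simp [trip, Finsupp.single_apply, h2] }
  refine ⟨bQ.reindex ε.symm, ?_⟩
  intro lm
  rw [Module.Basis.reindex_apply, Equiv.symm_symm, hbQ]
  have : b ↑(ε lm) = X 0 ^ lm.1 * X 1 ^ (lm.2 : ℕ) := by
    rw [hb, Φval3 (by simp [ε, trip]) (by simpa [ε, trip] using lm.2.2)]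
    simp [ε]
  rw [this]
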